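/- Let K be a field, D a division K-algebra such that D ⊗_K D^o is a Noetherian ring, δ₁, …, δ_t pairwise commuting K-derivations of D, Ev(Δ) ⊆ K^t the group of common eigenvalues, and 𝒯 the torsion subgroup of Ev(Δ) (which is finite). Let D₀ := ⋂ᵢ ker(δᵢ) and let D_𝒯 be the K-linear span in D of all common eigenvectors whose eigenvalue tuple lies in 𝒯. Then D_𝒯 is a division K-subalgebra of D, and D_𝒯 has dimension |𝒯| both as a left D₀-vector space and as a right D₀-vector space. -/

import Mathlib

set_option synthInstance.maxHeartbeats 1000000

open TensorProduct

set_option maxHeartbeats 1000000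

section AuxStmt6


open TensorProduct

section Aux

variable {K D : Type*} [Field K] [DivisionRing D] [Algebra K D] {t : ℕ}
variable {δ : Fin t → (D →ₗ[K] D)}

theorem aux_deriv_one (hLeib : ∀ i, ∀ a b : D, δ i (a * b) = δ i a * b + a * δ i b) (i : Fin t) :
    δ i 1 = 0 := by
  have h := hLeib i 1 1
  simp only [mul_one, one_mul] at h
  exact (left_eq_add.mp h)

theorem aux_eig_mul (hLeib : ∀ i, ∀ a b : D, δ i (a * b) = δ i a * b + a * δ i b)
    {lam mu : Fin t → K} {u v : D} (hu : ∀ i, δ i u = lam i • u) (hv : ∀ i, δ i v = mu i • v) :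
    ∀ i, δ i (u * v) = (lam + mu) i • (u * v) := by
  intro i
  rw [hLeib i u v, hu i, hv i, Pi.add_apply, add_smul, smul_mul_assoc, mul_smul_comm]

theorem aux_eig_inv (hLeib : ∀ i, ∀ a b : D, δ i (a * b) = δ i a * b + a * δ i b)
    {lam : Fin t → K} {u : D} (hu0 : u ≠ 0) (hu : ∀ i, δ i u = lam i • u) :
    ∀ i, δ i u⁻¹ = (-lam) i • u⁻¹ := by
  intro i
  have h := hLeib i u u⁻¹
  rw [mul_inv_cancel₀ hu0, aux_deriv_one hLeib, hu i] at h
  have h2 : u * δ i u⁻¹ = -(lam i • u * u⁻¹) := by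
    rw [eq_comm, neg_eq_iff_add_eq_zero, add_comm]
    linear_combination (norm := noncomm_ring) -h
  have h3 : δ i u⁻¹ = u⁻¹ * -(lam i • u * u⁻¹) := by
    rw [← h2, ← mul_assoc, inv_mul_cancel₀ hu0, one_mul]
  rw [h3, smul_mul_assoc, mul_inv_cancel₀ hu0, mul_neg, Pi.neg_apply, neg_smul, mul_smul_comm,
    mul_one]

theorem aux_eig_div (hLeib : ∀ i, ∀ a b : D, δ i (a * b) = δ i a * b + a * δ i b)
    {lam : Fin t → K} {u v : D} (hv0 : v ≠ 0) (hu : ∀ i, δ i u = lam i • u)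
    (hv : ∀ i, δ i v = lam i • v) : ∀ i, δ i (u * v⁻¹) = 0 := by
  intro i
  have := aux_eig_mul hLeib hu (aux_eig_inv hLeib hv0 hv) i
  simpa using this

theorem aux_eig_smul_left (hLeib : ∀ i, ∀ a b : D, δ i (a * b) = δ i a * b + a * δ i b)
    {lam : Fin t → K} {u d : D} (hd : ∀ i, δ i d = 0) (hu : ∀ i, δ i u = lam i • u) :
    ∀ i, δ i (d * u) = lam i • (d * u) := by
  intro i
  rw [hLeib i d u, hd i, zero_mul, zero_add, hu i, mul_smul_comm]

end Aux

variable {K D : Type*} [Field K] [DivisionRing D] [Algebra K D] {t : ℕ}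
variable {δ : Fin t → (D →ₗ[K] D)}

/-- Eigenvectors of the common eigenvalue problem with pairwise distinct eigenvalues are
left linearly independent over the common kernel `D₀`. -/
theorem aux_indep (hLeib : ∀ i, ∀ a b : D, δ i (a * b) = δ i a * b + a * δ i b)
    (D₀ : Subalgebra K D) (hD₀ : ∀ x : D, x ∈ D₀ ↔ ∀ i, δ i x = 0)
    (v : (Fin t → K) → D) :
    ∀ S : Finset (Fin t → K),
      (∀ lam ∈ S, (∀ i, δ i (v lam) = lam i • v lam) ∧ v lam ≠ 0) →
      ∀ c : (Fin t → K) → ↥D₀, (∑ mu ∈ S, (c mu : D) * v mu = 0) →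
      ∀ lam ∈ S, c lam = 0 := by
  classical
  intro S
  induction S using Finset.strongInduction with
  | _ S ih =>
    intro hv c hrel lam hlam
    set S' := S.erase lam with hS'
    have hsub : S' ⊂ S := Finset.erase_ssubset hlam
    -- derived relations
    have hδ : ∀ i : Fin t, ∑ mu ∈ S, (mu i - lam i) • ((c mu : D) * v mu) = 0 := by
      intro i
      have hA : ∑ mu ∈ S, mu i • ((c mu : D) * v mu) = 0 := by
        have := congrArg (δ i) hrel
        rw [map_sum, map_zero] at this
        rw [← this]
        refine Finset.sum_congr rfl fun mu hmu => ?_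
        exact (aux_eig_smul_left hLeib ((hD₀ (c mu)).mp (c mu).2) (hv mu hmu).1 i).symm
      have hB : ∑ mu ∈ S, lam i • ((c mu : D) * v mu) = 0 := by
        rw [← Finset.smul_sum, hrel, smul_zero]
      calc ∑ mu ∈ S, (mu i - lam i) • ((c mu : D) * v mu)
          = ∑ mu ∈ S, (mu i • ((c mu : D) * v mu) - lam i • ((c mu : D) * v mu)) := by
            refine Finset.sum_congr rfl fun mu _ => ?_
            rw [sub_smul]
        _ = 0 := by rw [Finset.sum_sub_distrib, hA, hB, sub_zero]
    have hδ' : ∀ i : Fin t, ∑ mu ∈ S', ((((mu i - lam i) • c mu : ↥D₀)) : D) * v mu = 0 := by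
      intro i
      have := hδ i
      rw [← Finset.add_sum_erase _ _ hlam, sub_self, zero_smul, zero_add] at this
      rw [← this]
      refine Finset.sum_congr rfl fun mu _ => ?_
      rw [SetLike.val_smul, smul_mul_assoc]
    have hz : ∀ mu ∈ S', c mu = 0 := by
      intro mu hmu
      by_contra hne
      have hmulam : ∀ i, mu i = lam i := by
        intro i
        have h0 : (mu i - lam i) • c mu = 0 :=
          ih S' hsub (fun a ha => hv a (Finset.mem_of_mem_erase ha))
            (fun a => (a i - lam i) • c a) (hδ' i) mu hmu
        have h0' : (mu i - lam i) • (c mu : D) = 0 := by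
          have := congrArg (Subtype.val) h0
          simpa using this
        rw [Algebra.smul_def] at h0'
        rcases mul_eq_zero.mp h0' with h | h
        · have : mu i - lam i = 0 := (algebraMap K D).injective (by simpa using h)
          exact sub_eq_zero.mp this
        · exact absurd (Subtype.ext h) hne
      exact absurd (funext hmulam) (Finset.ne_of_mem_erase hmu)
    have hfinal : (c lam : D) * v lam = 0 := by
      rw [← hrel, eq_comm]
      refine Finset.sum_eq_single_of_mem lam hlam fun mu hmu hne => ?_
      rw [show c mu = 0 from hz mu (Finset.mem_erase.mpr ⟨hne, hmu⟩)]
      simp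
    rcases mul_eq_zero.mp hfinal with h | h
    · exact Subtype.ext h
    · exact absurd h (hv lam hlam).2

section Aux
variable {K D : Type*} [Field K] [DivisionRing D] [Algebra K D] {t : ℕ}
variable (δ : Fin t → (D →ₗ[K] D))

/-- the set of common eigenvectors with eigenvalue in `G` -/
def eigSet (G : Set (Fin t → K)) : Set D := {u : D | ∃ lam ∈ G, ∀ i, δ i u = lam i • u}

open Classical in
/-- a choice of a nonzero common eigenvector for each eigenvalue (junk value `1` otherwise) -/
noncomputable def aux_uc (lam : Fin t → K) : D :=
  if h : ∃ u : D, u ≠ 0 ∧ ∀ i, δ i u = lam i • u then h.choose else 1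

variable {δ}

theorem aux_uc_ne_zero (lam : Fin t → K) : aux_uc δ lam ≠ 0 := by
  unfold aux_uc
  split
  · next h => exact h.choose_spec.1
  · exact one_ne_zero

theorem aux_uc_eig {lam : Fin t → K} (h : ∃ u : D, u ≠ 0 ∧ ∀ i, δ i u = lam i • u) :
    ∀ i, δ i (aux_uc δ lam) = lam i • aux_uc δ lam := by
  unfold aux_uc
  rw [dif_pos h]
  exact h.choose_spec.2

theorem aux_uc_mem_eigSet {G : Set (Fin t → K)} {lam : Fin t → K} (hlam : lam ∈ G)
    (h : ∃ u : D, u ≠ 0 ∧ ∀ i, δ i u = lam i • u) : aux_uc δ lam ∈ eigSet δ G :=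
  ⟨lam, hlam, aux_uc_eig h⟩

end Aux

section Main
variable {K D : Type*} [Field K] [DivisionRing D] [Algebra K D] {t : ℕ}
variable {δ : Fin t → (D →ₗ[K] D)}
variable {D₀ : Subalgebra K D}

theorem aux_D0_inv (hD₀ : ∀ x : D, x ∈ D₀ ↔ ∀ i, δ i x = 0)
    (hLeib : ∀ i, ∀ a b : D, δ i (a * b) = δ i a * b + a * δ i b) :
    ∀ x ∈ D₀, x⁻¹ ∈ D₀ := by
  intro x hx
  rcases eq_or_ne x 0 with rfl | hx0
  · simpa using hx
  · rw [hD₀] at hx ⊢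
    intro i
    have := aux_eig_inv hLeib hx0 (lam := 0) (fun j => by rw [hx j]; simp) i
    simpa using this

/-- `1` is in the eigenvector set (when `0 ∈ G`). -/
theorem aux_one_mem_eigSet (hLeib : ∀ i, ∀ a b : D, δ i (a * b) = δ i a * b + a * δ i b)
    {G : Set (Fin t → K)} (h0 : (0 : Fin t → K) ∈ G) : (1 : D) ∈ eigSet δ G :=
  ⟨0, h0, fun i => by rw [aux_deriv_one hLeib]; simp⟩

/-- the eigenvector set is closed under multiplication when `G` is closed under addition -/
theorem aux_eigSet_mul (hLeib : ∀ i, ∀ a b : D, δ i (a * b) = δ i a * b + a * δ i b)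
    {G : Set (Fin t → K)} (hadd : ∀ a ∈ G, ∀ b ∈ G, a + b ∈ G)
    {u v : D} (hu : u ∈ eigSet δ G) (hv : v ∈ eigSet δ G) : u * v ∈ eigSet δ G := by
  obtain ⟨lam, hlam, hu⟩ := hu
  obtain ⟨mu, hmu, hv⟩ := hv
  exact ⟨lam + mu, hadd _ hlam _ hmu, aux_eig_mul hLeib hu hv⟩

/-- left multiplication by an element of `D₀` preserves the eigenvector set -/
theorem aux_eigSet_smul_left (hD₀ : ∀ x : D, x ∈ D₀ ↔ ∀ i, δ i x = 0)
    (hLeib : ∀ i, ∀ a b : D, δ i (a * b) = δ i a * b + a * δ i b)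
    {G : Set (Fin t → K)} {d u : D} (hd : d ∈ D₀) (hu : u ∈ eigSet δ G) :
    d * u ∈ eigSet δ G := by
  obtain ⟨lam, hlam, hu⟩ := hu
  exact ⟨lam, hlam, aux_eig_smul_left hLeib ((hD₀ d).mp hd) hu⟩

/-- left multiplication by elements of `D₀` preserves the `K`-span of the eigenvector set -/
theorem aux_span_smul_left (hD₀ : ∀ x : D, x ∈ D₀ ↔ ∀ i, δ i x = 0)
    (hLeib : ∀ i, ∀ a b : D, δ i (a * b) = δ i a * b + a * δ i b)
    {G : Set (Fin t → K)} {d x : D} (hd : d ∈ D₀) (hx : x ∈ Submodule.span K (eigSet δ G)) :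
    d * x ∈ Submodule.span K (eigSet δ G) := by
  induction hx using Submodule.span_induction with
  | mem u hu => exact Submodule.subset_span (aux_eigSet_smul_left hD₀ hLeib hd hu)
  | zero => rw [mul_zero]; exact Submodule.zero_mem _
  | add y z _ _ hy hz => rw [mul_add]; exact Submodule.add_mem _ hy hz
  | smul k y _ hy => rw [mul_smul_comm]; exact Submodule.smul_mem _ _ hy

/-- the `D₀`-span and the `K`-span of the eigenvector set coincide -/
theorem aux_span_eq (hD₀ : ∀ x : D, x ∈ D₀ ↔ ∀ i, δ i x = 0)
    (hLeib : ∀ i, ∀ a b : D, δ i (a * b) = δ i a * b + a * δ i b)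
    (G : Set (Fin t → K)) :
    (Submodule.span (↥D₀) (eigSet δ G) : Set D) = (Submodule.span K (eigSet δ G) : Set D) := by
  apply Set.Subset.antisymm
  · intro x hx
    induction hx using Submodule.span_induction with
    | mem u hu => exact Submodule.subset_span hu
    | zero => exact Submodule.zero_mem _
    | add y z _ _ hy hz => exact Submodule.add_mem _ hy hz
    | smul d y _ hy =>
      have : (d • y : D) = (d : D) * y := rfl
      rw [SetLike.mem_coe] at hy ⊢
      rw [this]
      exact aux_span_smul_left hD₀ hLeib d.2 hy
  · intro x hx
    rw [SetLike.mem_coe] at hx ⊢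
    have : Submodule.span K (eigSet δ G) ≤
        Submodule.restrictScalars K (Submodule.span (↥D₀) (eigSet δ G)) :=
      Submodule.span_le.mpr (fun u hu => Submodule.subset_span hu)
    exact this hx

/-- the `K`-span of the eigenvector set is closed under multiplication -/
theorem aux_span_mul (hLeib : ∀ i, ∀ a b : D, δ i (a * b) = δ i a * b + a * δ i b)
    {G : Set (Fin t → K)} (hadd : ∀ a ∈ G, ∀ b ∈ G, a + b ∈ G)
    {x y : D} (hx : x ∈ Submodule.span K (eigSet δ G))
    (hy : y ∈ Submodule.span K (eigSet δ G)) : x * y ∈ Submodule.span K (eigSet δ G) := by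
  induction hx using Submodule.span_induction with
  | mem u hu =>
    induction hy using Submodule.span_induction with
    | mem v hv => exact Submodule.subset_span (aux_eigSet_mul hLeib hadd hu hv)
    | zero => rw [mul_zero]; exact Submodule.zero_mem _
    | add a b _ _ ha hb => rw [mul_add]; exact Submodule.add_mem _ ha hb
    | smul k a _ ha => rw [mul_smul_comm]; exact Submodule.smul_mem _ _ ha
  | zero => rw [zero_mul]; exact Submodule.zero_mem _
  | add a b _ _ ha hb => rw [add_mul]; exact Submodule.add_mem _ ha hb
  | smul k a _ ha => rw [smul_mul_assoc]; exact Submodule.smul_mem _ _ ha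

/-- the `D₀`-span of the eigenvector set is spanned by the chosen eigenvectors -/
theorem aux_span_uc (hLeib : ∀ i, ∀ a b : D, δ i (a * b) = δ i a * b + a * δ i b)
    (hD₀ : ∀ x : D, x ∈ D₀ ↔ ∀ i, δ i x = 0)
    {G : Set (Fin t → K)} (hG : ∀ lam ∈ G, ∃ u : D, u ≠ 0 ∧ ∀ i, δ i u = lam i • u) :
    Submodule.span (↥D₀) (eigSet δ G) = Submodule.span (↥D₀) (aux_uc δ '' G) := by
  apply le_antisymm
  · rw [Submodule.span_le]
    rintro u ⟨lam, hlam, hu⟩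
    rcases eq_or_ne u 0 with rfl | hu0
    · exact Submodule.zero_mem _
    · have huc := aux_uc_eig (hG lam hlam)
      have hmem : u * (aux_uc δ lam)⁻¹ ∈ D₀ := by
        rw [hD₀]
        exact aux_eig_div hLeib (aux_uc_ne_zero lam) hu huc
      have : u = (⟨u * (aux_uc δ lam)⁻¹, hmem⟩ : ↥D₀) • aux_uc δ lam := by
        show u = u * (aux_uc δ lam)⁻¹ * aux_uc δ lam
        rw [mul_assoc, inv_mul_cancel₀ (aux_uc_ne_zero lam), mul_one]
      rw [this]
      exact Submodule.smul_mem _ _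
        (Submodule.subset_span ⟨lam, hlam, rfl⟩)
  · rw [Submodule.span_le]
    rintro _ ⟨lam, hlam, rfl⟩
    exact Submodule.subset_span (aux_uc_mem_eigSet hlam (hG lam hlam))

end Main

variable {K D : Type*} [Field K] [DivisionRing D] [Algebra K D]

/-- A subalgebra of a division ring closed under inverses is a division ring. -/
@[reducible]
noncomputable def subalgDivisionRing (S : Subalgebra K D) (hinv : ∀ x ∈ S, x⁻¹ ∈ S) :
    DivisionRing ↥S :=
  { (inferInstance : Ring ↥S) with
    inv := fun x => ⟨(x : D)⁻¹, hinv x x.2⟩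
    mul_inv_cancel := fun a ha => by
      have ha' : (a : D) ≠ 0 := fun h => ha (Subtype.ext h)
      exact Subtype.ext (mul_inv_cancel₀ ha')
    inv_zero := Subtype.ext inv_zero
    nnqsmul := _
    qsmul := _ }

example (S : Subalgebra K D) (hinv : ∀ x ∈ S, x⁻¹ ∈ S) : True := by
  letI := subalgDivisionRing S hinv
  have : Module.rank ↥S ↥S = Module.rank ↥S ↥S := rfl
  trivial
section Main2
variable {K D : Type*} [Field K] [DivisionRing D] [Algebra K D] {t : ℕ}
variable {δ : Fin t → (D →ₗ[K] D)}
variable {D₀ : Subalgebra K D}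

theorem aux_span_inv (hLeib : ∀ i, ∀ a b : D, δ i (a * b) = δ i a * b + a * δ i b)
    (hD₀ : ∀ x : D, x ∈ D₀ ↔ ∀ i, δ i x = 0)
    {G : Set (Fin t → K)} (hG : ∀ lam ∈ G, ∃ u : D, u ≠ 0 ∧ ∀ i, δ i u = lam i • u)
    (hGfin : G.Finite) (h0 : (0 : Fin t → K) ∈ G)
    (hadd : ∀ a ∈ G, ∀ b ∈ G, a + b ∈ G) :
    ∀ x ∈ Submodule.span K (eigSet δ G), x ≠ 0 → x⁻¹ ∈ Submodule.span K (eigSet δ G) := by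
  letI := subalgDivisionRing D₀ (aux_D0_inv hD₀ hLeib)
  set M := Submodule.span (↥D₀) (eigSet δ G) with hM
  have hsets : (M : Set D) = (Submodule.span K (eigSet δ G) : Set D) :=
    aux_span_eq hD₀ hLeib (δ := δ) G
  have hmem_iff : ∀ z : D, z ∈ M ↔ z ∈ Submodule.span K (eigSet δ G) := fun z => by
    rw [← SetLike.mem_coe, hsets, SetLike.mem_coe]
  have hfin : Module.Finite (↥D₀) M := by
    rw [hM, aux_span_uc hLeib hD₀ hG]
    exact Module.Finite.span_of_finite _ (hGfin.image _)
  have key : ∀ w : D, w ∈ M → w ≠ 0 → ∃ y, y ∈ M ∧ y * w = 1 := by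
    intro w hw hw0
    have hmulM : ∀ y ∈ M, y * w ∈ M := by
      intro y hy
      rw [hmem_iff] at hy ⊢
      exact aux_span_mul hLeib hadd hy ((hmem_iff w).mp hw)
    let f : M →ₗ[↥D₀] M :=
      { toFun := fun y => ⟨(y : D) * w, hmulM _ y.2⟩
        map_add' := fun y z => by
          ext
          show ((y : D) + (z : D)) * w = (y : D) * w + (z : D) * w
          rw [add_mul]
        map_smul' := fun d y => by
          ext
          show ((d : D) * (y : D)) * w = (d : D) * ((y : D) * w)
          rw [mul_assoc] }
    have hinj : Function.Injective f := by
      intro y z h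
      have h' : (y : D) * w = (z : D) * w := congrArg Subtype.val h
      exact Subtype.ext (mul_right_cancel₀ hw0 h')
    have hsurj : Function.Surjective f := LinearMap.injective_iff_surjective.mp hinj
    obtain ⟨y, hy⟩ := hsurj ⟨1, (hmem_iff 1).mpr
      (Submodule.subset_span (aux_one_mem_eigSet hLeib h0))⟩
    exact ⟨(y : D), y.2, congrArg Subtype.val hy⟩
  intro x hx hx0
  obtain ⟨y, hyM, hyx⟩ := key x ((hmem_iff x).mpr hx) hx0
  have hy0 : y ≠ 0 := by
    intro h
    rw [h, zero_mul] at hyx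
    exact zero_ne_one hyx
  obtain ⟨z, hzM, hzy⟩ := key y hyM hy0
  have hzx : z = x := by
    have h1 : z * (y * x) = z * 1 := by rw [hyx]
    rw [← mul_assoc, hzy, one_mul, mul_one] at h1
    exact h1.symm
  have hxy : x * y = 1 := by rw [← hzx]; exact hzy
  have hxinv : x⁻¹ = y := inv_eq_of_mul_eq_one_right hxy
  rw [hxinv]
  exact (hmem_iff _).mp hyM

end Main2
section Main3
variable {K D : Type*} [Field K] [DivisionRing D] [Algebra K D] {t : ℕ}
variable {δ : Fin t → (D →ₗ[K] D)}
variable {D₀ : Subalgebra K D}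

theorem aux_not_mem_span (hLeib : ∀ i, ∀ a b : D, δ i (a * b) = δ i a * b + a * δ i b)
    (hD₀ : ∀ x : D, x ∈ D₀ ↔ ∀ i, δ i x = 0)
    {G : Set (Fin t → K)} (hGfin : G.Finite)
    (hG : ∀ lam ∈ G, ∃ u : D, u ≠ 0 ∧ ∀ i, δ i u = lam i • u)
    {lam' : Fin t → K} (hl : ∃ u : D, u ≠ 0 ∧ ∀ i, δ i u = lam' i • u) (hnot : lam' ∉ G) :
    aux_uc δ lam' ∉ Submodule.span K (eigSet δ G) := by
  classical
  intro hmem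
  -- transfer to the `D₀`-span of the chosen eigenvectors
  have hmem2 : aux_uc δ lam' ∈ Submodule.span (↥D₀) (aux_uc δ '' G) := by
    rw [← aux_span_uc hLeib hD₀ hG, ← SetLike.mem_coe, aux_span_eq hD₀ hLeib G]
    exact hmem
  set s : Finset (Fin t → K) := hGfin.toFinset with hs
  have hsG : (s : Set (Fin t → K)) = G := hGfin.coe_toFinset
  have himg : aux_uc δ '' G = Set.range (fun i : ↥s => aux_uc δ (i : Fin t → K)) := by
    rw [← hsG, Set.image_eq_range]
    rfl
  rw [himg] at hmem2
  obtain ⟨c, hc⟩ := (Submodule.mem_span_range_iff_exists_fun (↥D₀)).mp hmem2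
  -- coefficients as a function on eigenvalues
  set cfun : (Fin t → K) → ↥D₀ := fun mu => if h : mu ∈ s then c ⟨mu, h⟩ else 0 with hcfun
  have hsum : ∑ mu ∈ s, (cfun mu : D) * aux_uc δ mu = aux_uc δ lam' := by
    rw [← hc, eq_comm, ← Finset.sum_attach s (fun mu => (cfun mu : D) * aux_uc δ mu)]
    refine Finset.sum_congr rfl fun i _ => ?_
    rw [hcfun]
    simp only [i.2, dif_pos]
    rfl
  have hlnot : lam' ∉ s := by rw [← hsG] at hnot; exact fun h => hnot h
  set S : Finset (Fin t → K) := insert lam' s with hS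
  set cc : (Fin t → K) → ↥D₀ := fun mu => if mu = lam' then (-1 : ↥D₀) else cfun mu with hcc
  have hrel : ∑ mu ∈ S, (cc mu : D) * aux_uc δ mu = 0 := by
    rw [hS, Finset.sum_insert hlnot]
    have h1 : (cc lam' : D) = -1 := by rw [hcc]; simp
    have h2 : ∑ mu ∈ s, (cc mu : D) * aux_uc δ mu
        = ∑ mu ∈ s, (cfun mu : D) * aux_uc δ mu := by
      refine Finset.sum_congr rfl fun mu hmu => ?_
      have : mu ≠ lam' := fun h => hlnot (h ▸ hmu)
      rw [hcc]
      simp [this]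
    rw [h1, h2, hsum, neg_one_mul, neg_add_cancel]
  have hvS : ∀ lam ∈ S, (∀ i, δ i (aux_uc δ lam) = lam i • aux_uc δ lam) ∧ aux_uc δ lam ≠ 0 := by
    intro lam hlamS
    rcases Finset.mem_insert.mp hlamS with rfl | hlam
    · exact ⟨aux_uc_eig hl, aux_uc_ne_zero _⟩
    · have : lam ∈ G := by rw [← hsG]; exact hlam
      exact ⟨aux_uc_eig (hG lam this), aux_uc_ne_zero _⟩
  have := aux_indep hLeib D₀ hD₀ (aux_uc δ) S hvS cc hrel lam' (Finset.mem_insert_self _ _)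
  have hccl : cc lam' = -1 := by rw [hcc]; simp
  rw [hccl] at this
  have hone : (1 : ↥D₀) = 0 := by rw [← neg_neg (1 : ↥D₀), this, neg_zero]
  have hcoe := congrArg (Subtype.val) hone
  simp only [OneMemClass.coe_one, ZeroMemClass.coe_zero] at hcoe
  exact one_ne_zero (α := D) hcoe

end Main3
section Master
variable {K D : Type*} [Field K] [DivisionRing D] [Algebra K D] {t : ℕ}
variable {δ : Fin t → (D →ₗ[K] D)}
variable {D₀ : Subalgebra K D}

theorem aux_T_zero (hLeib : ∀ i, ∀ a b : D, δ i (a * b) = δ i a * b + a * δ i b)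
    {T : Set (Fin t → K)}
    (hT : T = {lam : Fin t → K | (∃ u : D, u ≠ 0 ∧ ∀ i, δ i u = lam i • u) ∧
        ∃ n : ℕ, 0 < n ∧ n • lam = 0}) : (0 : Fin t → K) ∈ T := by
  rw [hT]
  exact ⟨⟨1, one_ne_zero, fun i => by rw [aux_deriv_one hLeib]; simp⟩, 1, one_pos, by simp⟩

theorem aux_T_add (hLeib : ∀ i, ∀ a b : D, δ i (a * b) = δ i a * b + a * δ i b)
    {T : Set (Fin t → K)}
    (hT : T = {lam : Fin t → K | (∃ u : D, u ≠ 0 ∧ ∀ i, δ i u = lam i • u) ∧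
        ∃ n : ℕ, 0 < n ∧ n • lam = 0}) :
    ∀ a ∈ T, ∀ b ∈ T, a + b ∈ T := by
  intro a ha b hb
  rw [hT] at ha hb ⊢
  obtain ⟨⟨u, hu0, hu⟩, n, hn, hna⟩ := ha
  obtain ⟨⟨v, hv0, hv⟩, m, hm, hmb⟩ := hb
  refine ⟨⟨u * v, mul_ne_zero hu0 hv0, aux_eig_mul hLeib hu hv⟩, n * m, Nat.mul_pos hn hm, ?_⟩
  rw [smul_add]
  have h1 : (n * m) • a = 0 := by rw [mul_comm, mul_smul, hna, smul_zero]
  have h2 : (n * m) • b = 0 := by rw [mul_smul, hmb, smul_zero]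
  rw [h1, h2, add_zero]

theorem aux_T_ex {T : Set (Fin t → K)}
    (hT : T = {lam : Fin t → K | (∃ u : D, u ≠ 0 ∧ ∀ i, δ i u = lam i • u) ∧
        ∃ n : ℕ, 0 < n ∧ n • lam = 0}) :
    ∀ lam ∈ T, ∃ u : D, u ≠ 0 ∧ ∀ i, δ i u = lam i • u := by
  intro lam hlam
  rw [hT] at hlam
  exact hlam.1

theorem aux_hD₀_iff (D₀ : Subalgebra K D) (hD₀ : (D₀ : Set D) = ⋂ i, {x : D | δ i x = 0}) :
    ∀ x : D, x ∈ D₀ ↔ ∀ i, δ i x = 0 := by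
  intro x
  rw [← SetLike.mem_coe, hD₀, Set.mem_iInter]
  rfl

/-- master lemma: everything assuming `T` is finite -/
theorem aux_master (hLeib : ∀ i, ∀ a b : D, δ i (a * b) = δ i a * b + a * δ i b)
    (hD₀ : ∀ x : D, x ∈ D₀ ↔ ∀ i, δ i x = 0)
    {T : Set (Fin t → K)}
    (hT : T = {lam : Fin t → K | (∃ u : D, u ≠ 0 ∧ ∀ i, δ i u = lam i • u) ∧
        ∃ n : ℕ, 0 < n ∧ n • lam = 0})
    (hTfin : T.Finite) :
    (∃ S : Subalgebra K D,
      (S : Set D) = (Submodule.span K (eigSet δ T) : Set D) ∧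
      ∀ x ∈ S, x ≠ 0 → x⁻¹ ∈ S) ∧
    (Submodule.span (↥D₀) (eigSet δ T) : Set D) = (Submodule.span K (eigSet δ T) : Set D) ∧
    Module.rank (↥D₀) (↥(Submodule.span (↥D₀) (eigSet δ T))) = Nat.card T := by
  classical
  have hG := aux_T_ex (D := D) hT
  have h0 := aux_T_zero hLeib hT
  have hadd := aux_T_add hLeib hT
  refine ⟨?_, aux_span_eq hD₀ hLeib T, ?_⟩
  · refine ⟨{ carrier := (Submodule.span K (eigSet δ T) : Set D)
              mul_mem' := fun hx hy => aux_span_mul hLeib hadd hx hy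
              one_mem' := Submodule.subset_span (aux_one_mem_eigSet hLeib h0)
              add_mem' := fun hx hy => Submodule.add_mem _ hx hy
              zero_mem' := Submodule.zero_mem _
              algebraMap_mem' := fun k => by
                rw [Algebra.algebraMap_eq_smul_one]
                exact Submodule.smul_mem _ _
                  (Submodule.subset_span (aux_one_mem_eigSet hLeib h0)) }, rfl, ?_⟩
    intro x hx hx0
    exact aux_span_inv hLeib hD₀ hG hTfin h0 hadd x hx hx0
  · -- rank computation
    letI := subalgDivisionRing D₀ (aux_D0_inv hD₀ hLeib)
    haveI : Fintype ↥T := hTfin.fintype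
    set v : ↥T → D := fun lam => aux_uc δ (lam : Fin t → K) with hv
    have li : LinearIndependent (↥D₀) v := by
      rw [Fintype.linearIndependent_iff]
      intro g hg lam
      set s : Finset (Fin t → K) := hTfin.toFinset with hs
      have hsT : ∀ mu, mu ∈ s ↔ mu ∈ T := fun mu => hTfin.mem_toFinset
      set cfun : (Fin t → K) → ↥D₀ := fun mu => if h : mu ∈ T then g ⟨mu, h⟩ else 0 with hcfun
      have hrel : ∑ mu ∈ s, (cfun mu : D) * aux_uc δ mu = 0 := by
        rw [Finset.sum_subtype s hsT (fun mu => (cfun mu : D) * aux_uc δ mu)]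
        rw [← hg]
        refine Finset.sum_congr rfl fun i _ => ?_
        rw [hcfun]
        simp only [i.2, dif_pos]
        rfl
      have hvS : ∀ mu ∈ s, (∀ i, δ i (aux_uc δ mu) = mu i • aux_uc δ mu) ∧ aux_uc δ mu ≠ 0 := by
        intro mu hmu
        exact ⟨aux_uc_eig (hG mu ((hsT mu).mp hmu)), aux_uc_ne_zero _⟩
      have := aux_indep hLeib D₀ hD₀ (aux_uc δ) s hvS cfun hrel (lam : Fin t → K)
        ((hsT _).mpr lam.2)
      rw [hcfun] at this
      simp only [lam.2, dif_pos] at this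
      exact this
    have hspan : Submodule.span (↥D₀) (eigSet δ T) = Submodule.span (↥D₀) (Set.range v) := by
      rw [aux_span_uc hLeib hD₀ hG, hv, Set.image_eq_range]
    let b : Module.Basis ↥T (↥D₀) ↥(Submodule.span (↥D₀) (Set.range v)) := Module.Basis.span li
    let e : ↥(Submodule.span (↥D₀) (Set.range v)) ≃ₗ[↥D₀]
        ↥(Submodule.span (↥D₀) (eigSet δ T)) := LinearEquiv.ofEq _ _ hspan.symm
    have := rank_eq_card_basis (b.map e)
    rw [this, Nat.card_eq_fintype_card]
end Master
section Tors
variable {K D : Type*} [Field K] [DivisionRing D] [Algebra K D] {t : ℕ}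
variable {δ : Fin t → (D →ₗ[K] D)}

theorem aux_T_neg (hLeib : ∀ i, ∀ a b : D, δ i (a * b) = δ i a * b + a * δ i b)
    {T : Set (Fin t → K)}
    (hT : T = {lam : Fin t → K | (∃ u : D, u ≠ 0 ∧ ∀ i, δ i u = lam i • u) ∧
        ∃ n : ℕ, 0 < n ∧ n • lam = 0}) :
    ∀ a ∈ T, -a ∈ T := by
  intro a ha
  rw [hT] at ha ⊢
  obtain ⟨⟨u, hu0, hu⟩, n, hn, hna⟩ := ha
  exact ⟨⟨u⁻¹, inv_ne_zero hu0, aux_eig_inv hLeib hu0 hu⟩, n, hn, by rw [smul_neg, hna, neg_zero]⟩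

theorem aux_closure_sub_T (hLeib : ∀ i, ∀ a b : D, δ i (a * b) = δ i a * b + a * δ i b)
    {T : Set (Fin t → K)}
    (hT : T = {lam : Fin t → K | (∃ u : D, u ≠ 0 ∧ ∀ i, δ i u = lam i • u) ∧
        ∃ n : ℕ, 0 < n ∧ n • lam = 0})
    {s : Set (Fin t → K)} (hsT : s ⊆ T) :
    ((AddSubgroup.closure s : AddSubgroup (Fin t → K)) : Set (Fin t → K)) ⊆ T := by
  intro x hx
  rw [SetLike.mem_coe] at hx
  induction hx using AddSubgroup.closure_induction with
  | mem y hy => exact hsT hy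
  | zero => exact aux_T_zero hLeib hT
  | add y z _ _ hy hz => exact aux_T_add hLeib hT y hy z hz
  | neg y _ hy => exact aux_T_neg hLeib hT y hy

theorem aux_closure_finite (hLeib : ∀ i, ∀ a b : D, δ i (a * b) = δ i a * b + a * δ i b)
    {T : Set (Fin t → K)}
    (hT : T = {lam : Fin t → K | (∃ u : D, u ≠ 0 ∧ ∀ i, δ i u = lam i • u) ∧
        ∃ n : ℕ, 0 < n ∧ n • lam = 0})
    {s : Set (Fin t → K)} (hs : s.Finite) (hsT : s ⊆ T) :
    ((AddSubgroup.closure s : AddSubgroup (Fin t → K)) : Set (Fin t → K)).Finite := by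
  haveI : Finite ↥s := hs.to_subtype
  haveI : AddGroup.FG ↥(AddSubgroup.closure s) := AddGroup.closure_finite_fg s
  have htors : AddMonoid.IsTorsion ↥(AddSubgroup.closure s) := by
    intro g
    have hg : (g : Fin t → K) ∈ T := aux_closure_sub_T hLeib hT hsT g.2
    rw [hT] at hg
    obtain ⟨-, n, hn, hng⟩ := hg
    rw [isOfFinAddOrder_iff_nsmul_eq_zero]
    exact ⟨n, hn, by ext : 1; push_cast; exact hng⟩
  haveI : Finite ↥(AddSubgroup.closure s) := AddCommGroup.finite_of_fg_torsion _ htors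
  exact Set.toFinite _
end Tors
section Sep
open TensorProduct MulOpposite

variable {K D : Type*} [Field K] [DivisionRing D] [Algebra K D]

/-- the separating functional argument: for a division subalgebra `A` and `f ∉ A`, the element
`f ⊗ 1 - 1 ⊗ op f` is not in the left ideal generated by `{x ⊗ 1 - 1 ⊗ op x | x ∈ A}`. -/
theorem aux_sep (A : Subalgebra K D) (hinv : ∀ x ∈ A, x⁻¹ ∈ A) {f : D} (hf : f ∉ A) :
    (f ⊗ₜ[K] (1 : Dᵐᵒᵖ) - (1 : D) ⊗ₜ[K] (op f)) ∉
      Submodule.span (D ⊗[K] Dᵐᵒᵖ)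
        {w : D ⊗[K] Dᵐᵒᵖ | ∃ x ∈ A, w = x ⊗ₜ[K] (1 : Dᵐᵒᵖ) - (1 : D) ⊗ₜ[K] (op x)} := by
  letI : DivisionRing ↥A := subalgDivisionRing A hinv
  letI : Module (↥A)ᵐᵒᵖ D := Module.compHom D (RingHom.op A.val.toRingHom)
  have hsm : ∀ (sop : (↥A)ᵐᵒᵖ) (a : D), sop • a = a * ((unop sop : ↥A) : D) := fun _ _ => rfl
  -- the pair (1, f) is right `A`-linearly independent
  have li : LinearIndependent ((↥A)ᵐᵒᵖ) ![(1 : D), f] := by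
    rw [LinearIndependent.pair_iff]
    intro s u hsu
    rw [hsm s 1, hsm u f, one_mul] at hsu
    rcases eq_or_ne ((unop u : ↥A) : D) 0 with h2 | h2
    · have hu0 : unop u = 0 := Subtype.ext h2
      have h0 : ((unop s : ↥A) : D) = 0 := by rw [h2, mul_zero, add_zero] at hsu; exact hsu
      refine ⟨MulOpposite.unop_injective (Subtype.ext h0), MulOpposite.unop_injective hu0⟩
    · exfalso
      have hfval : f = -((unop s : ↥A) : D) * (((unop u : ↥A) : D))⁻¹ := by
        have hfu : f * ((unop u : ↥A) : D) = -((unop s : ↥A) : D) := by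
          rw [eq_neg_iff_add_eq_zero, add_comm]
          exact hsu
        rw [← hfu, mul_assoc, mul_inv_cancel₀ h2, mul_one]
      apply hf
      rw [hfval]
      exact A.mul_mem (A.neg_mem (unop s).2) (hinv _ (unop u).2)
  -- a right `A`-linear coordinate functional separating `f` from `1`
  let b : Module.Basis (Fin 2) ((↥A)ᵐᵒᵖ) ↥(Submodule.span ((↥A)ᵐᵒᵖ) (Set.range ![(1 : D), f])) :=
    Module.Basis.span li
  obtain ⟨φ, hφ⟩ := LinearMap.exists_extend (b.coord 1)
  have hmem0 : (1 : D) ∈ Submodule.span ((↥A)ᵐᵒᵖ) (Set.range ![(1 : D), f]) :=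
    Submodule.subset_span ⟨0, rfl⟩
  have hmem1 : f ∈ Submodule.span ((↥A)ᵐᵒᵖ) (Set.range ![(1 : D), f]) :=
    Submodule.subset_span ⟨1, rfl⟩
  have hb0 : b 0 = ⟨(1 : D), hmem0⟩ := Module.Basis.span_apply li 0
  have hb1 : b 1 = ⟨f, hmem1⟩ := Module.Basis.span_apply li 1
  have hφ1 : φ (1 : D) = 0 := by
    have := congrArg (fun g => g ⟨(1 : D), hmem0⟩) (congrArg DFunLike.coe hφ)
    simp only [LinearMap.coe_comp, Function.comp_apply, Submodule.coe_subtype] at this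
    rw [this, ← hb0, Module.Basis.coord_apply, Module.Basis.repr_self]
    simp
  have hφf : φ f = 1 := by
    have := congrArg (fun g => g ⟨f, hmem1⟩) (congrArg DFunLike.coe hφ)
    simp only [LinearMap.coe_comp, Function.comp_apply, Submodule.coe_subtype] at this
    rw [this, ← hb1, Module.Basis.coord_apply, Module.Basis.repr_self]
    simp
  -- the functional into `D`
  set cf : D → D := fun a => ((φ a).unop : D) with hcf
  have cf_mul : ∀ (a : D) (x : ↥A), cf (a * (x : D)) = cf a * (x : D) := by
    intro a x
    have h1 : a * (x : D) = (op x) • a := rfl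
    rw [hcf]
    simp only
    rw [h1, map_smul]
    have : (op x) • (φ a) = op ((φ a).unop * x) := rfl
    rw [this]
    simp
  have cf_add : ∀ a a' : D, cf (a + a') = cf a + cf a' := by
    intro a a'
    rw [hcf]
    simp only [map_add, unop_add]
    push_cast
    rfl
  have cf_ksmul : ∀ (k : K) (a : D), cf (k • a) = k • cf a := by
    intro k a
    have halg : k • a = a * ((⟨algebraMap K D k, A.algebraMap_mem k⟩ : ↥A) : D) := by
      rw [Algebra.smul_def, Algebra.commutes]
    rw [halg, cf_mul]
    rw [Algebra.smul_def, Algebra.commutes]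
  have cf_one : cf 1 = 0 := by rw [hcf]; simp only [hφ1]; simp
  have cf_f : cf f = 1 := by rw [hcf]; simp only [hφf]; simp
  -- the separating functional on the tensor algebra
  let g : D →ₗ[K] Dᵐᵒᵖ →ₗ[K] D := LinearMap.mk₂ K (fun a c => cf a * c.unop)
    (fun a a' c => by simp only [cf_add, add_mul])
    (fun k a c => by simp only [cf_ksmul, smul_mul_assoc])
    (fun a c c' => by simp only [unop_add, mul_add])
    (fun k a c => by simp only [unop_smul, mul_smul_comm])
  let Θ : (D ⊗[K] Dᵐᵒᵖ) →ₗ[K] D := TensorProduct.lift g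
  have hΘ : ∀ (a : D) (c : Dᵐᵒᵖ), Θ (a ⊗ₜ[K] c) = cf a * c.unop := fun a c => rfl
  -- Θ kills all left multiples of the generators
  have hgen : ∀ (r : D ⊗[K] Dᵐᵒᵖ) (x : ↥A),
      Θ (r * ((x : D) ⊗ₜ[K] (1 : Dᵐᵒᵖ) - (1 : D) ⊗ₜ[K] (op (x : D)))) = 0 := by
    intro r x
    induction r using TensorProduct.induction_on with
    | zero => rw [zero_mul, map_zero]
    | tmul a c =>
      rw [mul_sub, Algebra.TensorProduct.tmul_mul_tmul, Algebra.TensorProduct.tmul_mul_tmul,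
        map_sub, hΘ, hΘ, mul_one, unop_mul, unop_op]
      rw [cf_mul a x, mul_one, mul_assoc, sub_self]
    | add r₁ r₂ h₁ h₂ => rw [add_mul, map_add, h₁, h₂, add_zero]
  -- conclude
  intro hmem
  -- the K-span of all left multiples contains the span
  set N : Submodule K (D ⊗[K] Dᵐᵒᵖ) := Submodule.span K
    {w : D ⊗[K] Dᵐᵒᵖ | ∃ (r : D ⊗[K] Dᵐᵒᵖ) (x : ↥A),
      w = r * ((x : D) ⊗ₜ[K] (1 : Dᵐᵒᵖ) - (1 : D) ⊗ₜ[K] (op (x : D)))} with hN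
  have hNsmul : ∀ (r : D ⊗[K] Dᵐᵒᵖ), ∀ w ∈ N, r * w ∈ N := by
    intro r w hw
    induction hw using Submodule.span_induction with
    | mem w hw =>
      obtain ⟨r', x, rfl⟩ := hw
      rw [← mul_assoc]
      exact Submodule.subset_span ⟨r * r', x, rfl⟩
    | zero => rw [mul_zero]; exact Submodule.zero_mem _
    | add a c _ _ ha hc => rw [mul_add]; exact Submodule.add_mem _ ha hc
    | smul k a _ ha => rw [mul_smul_comm]; exact Submodule.smul_mem _ _ ha
  let N' : Submodule (D ⊗[K] Dᵐᵒᵖ) (D ⊗[K] Dᵐᵒᵖ) :=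
    { carrier := (N : Set (D ⊗[K] Dᵐᵒᵖ))
      add_mem' := fun ha hb => N.add_mem ha hb
      zero_mem' := N.zero_mem
      smul_mem' := fun r w hw => hNsmul r w hw }
  have hspanN : Submodule.span (D ⊗[K] Dᵐᵒᵖ)
      {w : D ⊗[K] Dᵐᵒᵖ | ∃ x ∈ A, w = x ⊗ₜ[K] (1 : Dᵐᵒᵖ) - (1 : D) ⊗ₜ[K] (op x)} ≤ N' := by
    rw [Submodule.span_le]
    rintro w ⟨x, hx, rfl⟩
    exact Submodule.subset_span ⟨1, ⟨x, hx⟩, by rw [one_mul]⟩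
  have hNker : ∀ w ∈ N, Θ w = 0 := by
    intro w hw
    have : N ≤ LinearMap.ker Θ := by
      rw [hN, Submodule.span_le]
      rintro w' ⟨r, x, rfl⟩
      exact hgen r x
    exact this hw
  have hval : Θ (f ⊗ₜ[K] (1 : Dᵐᵒᵖ) - (1 : D) ⊗ₜ[K] (op f)) = 1 := by
    rw [map_sub, hΘ, hΘ, unop_one, unop_op, mul_one, cf_f, cf_one, zero_mul, sub_zero]
  have : Θ (f ⊗ₜ[K] (1 : Dᵐᵒᵖ) - (1 : D) ⊗ₜ[K] (op f)) = 0 := hNker _ (hspanN hmem)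
  rw [hval] at this
  exact one_ne_zero this
end Sep
section TFin
open TensorProduct MulOpposite

variable {K D : Type*} [Field K] [DivisionRing D] [Algebra K D] {t : ℕ}
variable {δ : Fin t → (D →ₗ[K] D)} {D₀ : Subalgebra K D}

theorem aux_T_finite (hNoeth : IsNoetherianRing (D ⊗[K] Dᵐᵒᵖ))
    (hLeib : ∀ i, ∀ a b : D, δ i (a * b) = δ i a * b + a * δ i b)
    (hD₀ : ∀ x : D, x ∈ D₀ ↔ ∀ i, δ i x = 0)
    {T : Set (Fin t → K)}
    (hT : T = {lam : Fin t → K | (∃ u : D, u ≠ 0 ∧ ∀ i, δ i u = lam i • u) ∧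
        ∃ n : ℕ, 0 < n ∧ n • lam = 0}) :
    T.Finite := by
  classical
  by_contra hfin
  have hG := aux_T_ex (D := D) hT
  -- we can always pick a new torsion eigenvalue
  have hpick : ∀ s : Finset (Fin t → K), (↑s ⊆ T) →
      ∃ lam, lam ∈ T ∧ lam ∉ AddSubgroup.closure (↑s : Set (Fin t → K)) := by
    intro s hs
    have hfin2 : ((AddSubgroup.closure (↑s : Set (Fin t → K)) :
        AddSubgroup (Fin t → K)) : Set (Fin t → K)).Finite :=
      aux_closure_finite hLeib hT s.finite_toSet hs
    by_contra h
    push_neg at h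
    exact hfin (hfin2.subset (fun lam hlam => h lam hlam))
  -- the recursively chosen finite sets of eigenvalues
  let F : ℕ → {s : Finset (Fin t → K) // ↑s ⊆ T} := fun n => Nat.rec
    ⟨∅, by simp⟩
    (fun n p => ⟨insert (hpick p.1 p.2).choose p.1, by
      rw [Finset.coe_insert]
      exact Set.insert_subset ((hpick p.1 p.2).choose_spec.1) p.2⟩) n
  set new : ℕ → (Fin t → K) := fun n => (hpick (F n).1 (F n).2).choose with hnew
  have hFsucc : ∀ n, (F (n + 1)).1 = insert (new n) (F n).1 := fun n => rfl
  have hnewT : ∀ n, new n ∈ T := fun n => (hpick (F n).1 (F n).2).choose_spec.1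
  have hnewnot : ∀ n, new n ∉ AddSubgroup.closure (↑(F n).1 : Set (Fin t → K)) :=
    fun n => (hpick (F n).1 (F n).2).choose_spec.2
  set Gset : ℕ → Set (Fin t → K) := fun n =>
    ((AddSubgroup.closure (↑(F n).1 : Set (Fin t → K))) : Set (Fin t → K)) with hGset
  have hGfin : ∀ n, (Gset n).Finite := fun n =>
    aux_closure_finite hLeib hT (F n).1.finite_toSet (F n).2
  have hGT : ∀ n, Gset n ⊆ T := fun n => aux_closure_sub_T hLeib hT (F n).2
  have hGEv : ∀ n, ∀ lam ∈ Gset n, ∃ u : D, u ≠ 0 ∧ ∀ i, δ i u = lam i • u :=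
    fun n lam hl => hG lam (hGT n hl)
  have h0G : ∀ n, (0 : Fin t → K) ∈ Gset n := fun n => AddSubgroup.zero_mem _
  have hGadd : ∀ n, ∀ a ∈ Gset n, ∀ b ∈ Gset n, a + b ∈ Gset n :=
    fun n a ha b hb => AddSubgroup.add_mem _ ha hb
  have hGmono : ∀ n, Gset n ⊆ Gset (n + 1) := by
    intro n
    apply SetLike.coe_subset_coe.mpr
    apply AddSubgroup.closure_mono
    rw [hFsucc n, Finset.coe_insert]
    exact Set.subset_insert _ _
  have hnewmem : ∀ n, new n ∈ Gset (n + 1) := by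
    intro n
    apply AddSubgroup.subset_closure
    rw [hFsucc n, Finset.coe_insert]
    exact Set.mem_insert _ _
  -- the chain of division subalgebras
  set An : ℕ → Subalgebra K D := fun n =>
    { carrier := (Submodule.span K (eigSet δ (Gset n)) : Set D)
      mul_mem' := fun hx hy => aux_span_mul hLeib (hGadd n) hx hy
      one_mem' := Submodule.subset_span (aux_one_mem_eigSet hLeib (h0G n))
      add_mem' := fun hx hy => Submodule.add_mem _ hx hy
      zero_mem' := Submodule.zero_mem _
      algebraMap_mem' := fun k => by
        rw [Algebra.algebraMap_eq_smul_one]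
        exact Submodule.smul_mem _ _
          (Submodule.subset_span (aux_one_mem_eigSet hLeib (h0G n))) } with hAn
  have hAinv : ∀ n, ∀ x ∈ An n, x⁻¹ ∈ An n := by
    intro n x hx
    rcases eq_or_ne x 0 with rfl | hx0
    · rw [inv_zero]; exact (An n).zero_mem
    · exact aux_span_inv hLeib hD₀ (hGEv n) (hGfin n) (h0G n) (hGadd n) x hx hx0
  have hAmono : ∀ n, (An n : Set D) ⊆ (An (n + 1) : Set D) := by
    intro n
    apply Submodule.span_mono
    rintro u ⟨lam, hl, he⟩
    exact ⟨lam, hGmono n hl, he⟩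
  -- the new eigenvector
  set fvec : ℕ → D := fun n => aux_uc δ (new n) with hfvec
  have hfmem : ∀ n, fvec n ∈ An (n + 1) := fun n =>
    Submodule.subset_span (aux_uc_mem_eigSet (hnewmem n) (hG _ (hnewT n)))
  have hfnot : ∀ n, fvec n ∉ An n := fun n =>
    aux_not_mem_span hLeib hD₀ (hGfin n) (hGEv n) (hG _ (hnewT n)) (hnewnot n)
  -- the chain of left ideals
  set J : ℕ → Submodule (D ⊗[K] Dᵐᵒᵖ) (D ⊗[K] Dᵐᵒᵖ) := fun n =>
    Submodule.span (D ⊗[K] Dᵐᵒᵖ)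
      {w : D ⊗[K] Dᵐᵒᵖ | ∃ x ∈ An n, w = x ⊗ₜ[K] (1 : Dᵐᵒᵖ) - (1 : D) ⊗ₜ[K] (op x)} with hJ
  have hJmono : Monotone J := by
    apply monotone_nat_of_le_succ
    intro n
    apply Submodule.span_mono
    rintro w ⟨x, hx, rfl⟩
    exact ⟨x, hAmono n hx, rfl⟩
  obtain ⟨n, hn⟩ := monotone_stabilizes_iff_noetherian.mpr
    (isNoetherianRing_iff.mp hNoeth) ⟨J, hJmono⟩
  have heq : J n = J (n + 1) := hn (n + 1) (Nat.le_succ n)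
  have hzeta_in : (fvec n ⊗ₜ[K] (1 : Dᵐᵒᵖ) - (1 : D) ⊗ₜ[K] (op (fvec n))) ∈ J (n + 1) :=
    Submodule.subset_span ⟨fvec n, hfmem n, rfl⟩
  rw [← heq] at hzeta_in
  exact aux_sep (An n) (hAinv n) (hfnot n) hzeta_in
end TFin

end AuxStmt6

open MulOpposite in
/-- Let `D` be a division `K`-algebra with `D ⊗[K] Dᵐᵒᵖ` Noetherian,
`δ₁, …, δ_t` pairwise commuting `K`-derivations of `D`, `T` the (finite) torsion subgroup of the
group of common eigenvalues, `D₀ = ⋂ᵢ ker δᵢ` and `D_T` the span of the eigenvectors with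
eigenvalue in `T`.  Then `T` is finite, `D_T` is a division `K`-subalgebra of `D`, and `D_T`
has left and right dimension `|T|` over `D₀` (the right dimension being expressed as the left
dimension of the corresponding subspace of the opposite algebra `Dᵐᵒᵖ` over `D₀.op`). -/
theorem stmt6 (K D : Type*) [Field K] [DivisionRing D] [Algebra K D]
    (hNoeth : IsNoetherianRing (D ⊗[K] Dᵐᵒᵖ))
    (t : ℕ) (δ : Fin t → (D →ₗ[K] D))
    (hLeib : ∀ i, ∀ a b : D, δ i (a * b) = δ i a * b + a * δ i b)
    (hcomm : ∀ i j, ∀ x : D, δ i (δ j x) = δ j (δ i x))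
    (D₀ : Subalgebra K D) (hD₀ : (D₀ : Set D) = ⋂ i, {x : D | δ i x = 0})
    (T : Set (Fin t → K))
    (hT : T = {lam : Fin t → K | (∃ u : D, u ≠ 0 ∧ ∀ i, δ i u = lam i • u) ∧
        ∃ n : ℕ, 0 < n ∧ n • lam = 0})
    (E : Set D) (hE : E = {u : D | ∃ lam ∈ T, ∀ i, δ i u = lam i • u}) :
    T.Finite ∧
    (∃ S : Subalgebra K D,
      (S : Set D) = (Submodule.span K E : Set D) ∧
      ∀ x ∈ S, x ≠ 0 → x⁻¹ ∈ S) ∧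
    (Submodule.span (↥D₀) E : Set D) = (Submodule.span K E : Set D) ∧
    Module.rank (↥D₀) (↥(Submodule.span (↥D₀) E)) = Nat.card T ∧
    Module.rank (↥(D₀.op)) (↥(Submodule.span (↥(D₀.op)) (MulOpposite.op '' E))) = Nat.card T := by
  have hD₀' : ∀ x : D, x ∈ D₀ ↔ ∀ i, δ i x = 0 := aux_hD₀_iff D₀ hD₀
  have hTfin : T.Finite := aux_T_finite hNoeth hLeib hD₀' hT
  have hEeq : E = eigSet δ T := hE
  obtain ⟨hS, hspan, hrank⟩ := aux_master hLeib hD₀' hT hTfin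
  -- the opposite side
  set δ' : Fin t → (Dᵐᵒᵖ →ₗ[K] Dᵐᵒᵖ) := fun i =>
    ((opLinearEquiv K).toLinearMap ∘ₗ δ i) ∘ₗ (opLinearEquiv K (M := D)).symm.toLinearMap
    with hδ'def
  have hδ' : ∀ i (x : D), δ' i (op x) = op (δ i x) := fun i x => rfl
  have hLeib' : ∀ i, ∀ a b : Dᵐᵒᵖ, δ' i (a * b) = δ' i a * b + a * δ' i b := by
    intro i a b
    have key : ∀ x y : D, δ' i (op x * op y) = δ' i (op x) * op y + op x * δ' i (op y) := by
      intro x y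
      have h1 : op x * op y = op (y * x) := rfl
      rw [h1, hδ', hLeib i y x, op_add]
      have h2 : op (δ i y * x) = op x * op (δ i y) := rfl
      have h3 : op (y * δ i x) = op (δ i x) * op y := rfl
      rw [h2, h3, add_comm, ← hδ', ← hδ']
    rw [← op_unop a, ← op_unop b]
    exact key (unop a) (unop b)
  have hD₀op : ∀ y : Dᵐᵒᵖ, y ∈ D₀.op ↔ ∀ i, δ' i y = 0 := by
    intro y
    rw [Subalgebra.mem_op, hD₀' (unop y)]
    constructor
    · intro h i
      rw [← op_unop y, hδ', h i, op_zero]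
    · intro h i
      have := h i
      rw [← op_unop y, hδ'] at this
      exact op_injective (by rw [this, op_zero])
  have hT' : T = {lam : Fin t → K | (∃ u : Dᵐᵒᵖ, u ≠ 0 ∧ ∀ i, δ' i u = lam i • u) ∧
      ∃ n : ℕ, 0 < n ∧ n • lam = 0} := by
    rw [hT]
    ext lam
    simp only [Set.mem_setOf_eq]
    constructor
    · rintro ⟨⟨u, hu0, hu⟩, htor⟩
      refine ⟨⟨op u, by simpa using hu0, fun i => ?_⟩, htor⟩
      rw [hδ', hu i, op_smul]
    · rintro ⟨⟨u, hu0, hu⟩, htor⟩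
      refine ⟨⟨unop u, by simpa using hu0, fun i => ?_⟩, htor⟩
      have := hu i
      rw [← op_unop u, hδ', ← op_smul] at this
      exact op_injective this
  have hE' : eigSet δ' T = op '' E := by
    rw [hE]
    ext u
    constructor
    · rintro ⟨lam, hlam, hu⟩
      refine ⟨unop u, ⟨lam, hlam, fun i => ?_⟩, op_unop u⟩
      have := hu i
      rw [← op_unop u, hδ', ← op_smul] at this
      exact op_injective this
    · rintro ⟨e, ⟨lam, hlam, he⟩, rfl⟩
      exact ⟨lam, hlam, fun i => by rw [hδ', he i, op_smul]⟩
  obtain ⟨-, -, hrank'⟩ := aux_master (D := Dᵐᵒᵖ) hLeib' hD₀op hT' hTfin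
  rw [hE'] at hrank'
  rw [hEeq] at hrank'
  rw [hEeq]
  exact ⟨hTfin, hS, hspan, hrank, hrank'⟩
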